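/- Rivin's functional is convex: the function F(u₁,u₂,u₃) obtained by integrating the closed 1-form Σᵢ a_i du_i (where u_i = ln l_i and a_i is the angle opposite side l_i of a Euclidean triangle) has positive semidefinite Hessian at every point of its domain. -/

import Mathlib

open Real

/-- The angle `a_i` of the Euclidean triangle with side lengths `l_i = exp (u i)`,
as a function of `u ∈ ℝ³` (Rivin's coordinates). -/
noncomputable def rivinAngle (i : Fin 3) (u : EuclideanSpace ℝ (Fin 3)) : ℝ :=
  Real.arccos ((Real.exp (u (i + 1)) ^ 2 + Real.exp (u (i + 2)) ^ 2 - Real.exp (u i) ^ 2) /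
    (2 * Real.exp (u (i + 1)) * Real.exp (u (i + 2))))

lemma rivin_fderiv_single (u : EuclideanSpace ℝ (Fin 3))
    (htri : ∀ i : Fin 3, Real.exp (u i) < Real.exp (u (i + 1)) + Real.exp (u (i + 2)))
    (i j : Fin 3) :
    fderiv ℝ (rivinAngle i) u (EuclideanSpace.single j 1) =
      (2 * Real.exp (u i) ^ 2 * (if j = i then (1:ℝ) else 0)
        - (Real.exp (u i) ^ 2 + Real.exp (u (i+1)) ^ 2 - Real.exp (u (i+2)) ^ 2)
            * (if j = i + 1 then (1:ℝ) else 0)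
        - (Real.exp (u i) ^ 2 + Real.exp (u (i+2)) ^ 2 - Real.exp (u (i+1)) ^ 2)
            * (if j = i + 2 then (1:ℝ) else 0))
      / Real.sqrt ((2 * Real.exp (u (i+1)) * Real.exp (u (i+2))) ^ 2
          - (Real.exp (u (i+1)) ^ 2 + Real.exp (u (i+2)) ^ 2 - Real.exp (u i) ^ 2) ^ 2) := by
  have h11 : i + 1 + 1 = i + 2 := by rw [add_assoc, show (1+1 : Fin 3) = 2 by decide]
  have h12 : i + 1 + 2 = i := by rw [add_assoc, show (1+2 : Fin 3) = 0 by decide, add_zero]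
  have h21 : i + 2 + 1 = i := by rw [add_assoc, show (2+1 : Fin 3) = 0 by decide, add_zero]
  have h22 : i + 2 + 2 = i + 1 := by rw [add_assoc, show (2+2 : Fin 3) = 1 by decide]
  set a := Real.exp (u i) with ha
  set b := Real.exp (u (i+1)) with hb
  set c := Real.exp (u (i+2)) with hc
  have ha0 : 0 < a := Real.exp_pos _
  have hb0 : 0 < b := Real.exp_pos _
  have hc0 : 0 < c := Real.exp_pos _
  have hA : a < b + c := htri i
  have hB : b < c + a := by have := htri (i+1); rwa [h11, h12] at this
  have hC : c < a + b := by have := htri (i+2); rwa [h21, h22] at this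
  have hd0 : (2 * b * c) ≠ 0 := by positivity
  have hk : ∀ k, HasFDerivAt (fun v : EuclideanSpace ℝ (Fin 3) => Real.exp (v k))
      (Real.exp (u k) • PiLp.proj (𝕜 := ℝ) 2 (fun _ : Fin 3 => ℝ) k) u :=
    fun k => (PiLp.hasFDerivAt_apply (𝕜 := ℝ) 2 u k).exp
  have hn := (((hk (i+1)).mul (hk (i+1))).add ((hk (i+2)).mul (hk (i+2)))).sub
    ((hk i).mul (hk i))
  simp only [← pow_two] at hn
  have hd := ((hk (i+1)).const_mul 2).mul (hk (i+2))
  have hinv := (hasDerivAt_inv hd0).comp_hasFDerivAt u hd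
  have hq := hn.mul hinv
  simp only [Function.comp_def] at hq
  set Q : ℝ := (b ^ 2 + c ^ 2 - a ^ 2) / (2 * b * c) with hQ
  have hQ1 : -1 < Q := by
    rw [hQ, lt_div_iff₀ (by positivity)]; nlinarith
  have hQ2 : Q < 1 := by
    rw [hQ, div_lt_one (by positivity)]; nlinarith
  have harc := Real.hasDerivAt_arccos hQ1.ne' hQ2.ne
  have hcomp := harc.comp_hasFDerivAt u hq
  have hriv : HasFDerivAt (rivinAngle i) _ u := hcomp
  rw [hriv.fderiv]
  have hT : 0 < (2 * b * c) ^ 2 - (b ^ 2 + c ^ 2 - a ^ 2) ^ 2 := by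
    nlinarith [mul_pos (mul_pos (show (0:ℝ) < b + c - a by linarith)
      (show (0:ℝ) < c + a - b by linarith))
      (mul_pos (show (0:ℝ) < a + b - c by linarith)
      (show (0:ℝ) < a + b + c by linarith))]
  have hs : Real.sqrt (1 - Q ^ 2)
      = Real.sqrt ((2*b*c) ^ 2 - (b ^ 2 + c ^ 2 - a ^ 2) ^ 2) / (2 * b * c) := by
    rw [show 1 - Q ^ 2 = ((2*b*c) ^ 2 - (b ^ 2 + c ^ 2 - a ^ 2) ^ 2) / (2*b*c) ^ 2 by
        rw [hQ]; field_simp,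
      Real.sqrt_div hT.le, Real.sqrt_sq (by positivity)]
  have hsne : Real.sqrt ((2*b*c) ^ 2 - (b ^ 2 + c ^ 2 - a ^ 2) ^ 2) ≠ 0 := by
    positivity
  simp only [ContinuousLinearMap.coe_smul', Pi.smul_apply, ContinuousLinearMap.add_apply,
    ContinuousLinearMap.sub_apply, ContinuousLinearMap.smul_apply, PiLp.proj_apply,
    EuclideanSpace.single_apply, smul_eq_mul, Pi.add_apply, Pi.sub_apply, Pi.mul_apply, Pi.pow_apply]
  simp only [← ha, ← hb, ← hc]
  have f1 : ∀ k : Fin 3, (k = k + 1) = False := by decide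
  have f2 : ∀ k : Fin 3, (k = k + 2) = False := by decide
  have f3 : ∀ k : Fin 3, (k + 1 = k) = False := by decide
  have f4 : ∀ k : Fin 3, (k + 2 = k) = False := by decide
  have f5 : ∀ k : Fin 3, (k + 1 = k + 2) = False := by decide
  have f6 : ∀ k : Fin 3, (k + 2 = k + 1) = False := by decide
  have hcase : ∀ i j : Fin 3, j = i ∨ j = i + 1 ∨ j = i + 2 := by decide
  rcases hcase i j with rfl | rfl | rfl <;>
    simp only [f1, f2, f3, f4, f5, f6, eq_self_iff_true, if_true, if_false, mul_one, mul_zero,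
      sub_zero, zero_sub, add_zero, zero_add] <;>
    rw [hs] <;> field_simp <;> ring

/-- Rivin's functional is convex: the Hessian matrix `(∂a_i/∂u_j)` of any potential
`F` with `∂F/∂u_i = a_i` is positive semidefinite at every point of the domain
`{u : l_i = exp u_i satisfy the strict triangle inequalities}`. -/
theorem rivin_functional_convex (u : EuclideanSpace ℝ (Fin 3))
    (htri : ∀ i : Fin 3, Real.exp (u i) < Real.exp (u (i + 1)) + Real.exp (u (i + 2))) :
    ∀ v : Fin 3 → ℝ,
      0 ≤ ∑ i : Fin 3, ∑ j : Fin 3,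
        v i * v j * (fderiv ℝ (rivinAngle i) u (EuclideanSpace.single j 1)) := by
  intro v
  have key := rivin_fderiv_single u htri
  have g01 : (0:Fin 3)+1 = 1 := by decide
  have g02 : (0:Fin 3)+2 = 2 := by decide
  have g11 : (1:Fin 3)+1 = 2 := by decide
  have g12 : (1:Fin 3)+2 = 0 := by decide
  have g21 : (2:Fin 3)+1 = 0 := by decide
  have g22 : (2:Fin 3)+2 = 1 := by decide
  have e01 : ((0:Fin 3) = 1) = False := by decide
  have e02 : ((0:Fin 3) = 2) = False := by decide
  have e10 : ((1:Fin 3) = 0) = False := by decide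
  have e12 : ((1:Fin 3) = 2) = False := by decide
  have e20 : ((2:Fin 3) = 0) = False := by decide
  have e21 : ((2:Fin 3) = 1) = False := by decide
  simp only [Fin.sum_univ_three]
  rw [key 0 0, key 0 1, key 0 2, key 1 0, key 1 1, key 1 2, key 2 0, key 2 1, key 2 2]
  simp only [g01, g02, g11, g12, g21, g22, e01, e02, e10, e12, e20, e21,
    Fin.reduceAdd, Fin.reduceEq,
    eq_self_iff_true, if_true, if_false, mul_one, mul_zero, sub_zero, zero_sub, add_zero, zero_add]
  set a := Real.exp (u 0) with ha
  set b := Real.exp (u 1) with hb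
  set c := Real.exp (u 2) with hc
  have ha0 : 0 < a := Real.exp_pos _
  have hb0 : 0 < b := Real.exp_pos _
  have hc0 : 0 < c := Real.exp_pos _
  have hA : a < b + c := by have := htri 0; rw [g01, g02] at this; exact this
  have hB : b < c + a := by have := htri 1; rw [g11, g12] at this; exact this
  have hC : c < a + b := by have := htri 2; rw [g21, g22] at this; exact this
  have hT : 0 < (2 * b * c) ^ 2 - (b ^ 2 + c ^ 2 - a ^ 2) ^ 2 := by
    nlinarith [mul_pos (mul_pos (show (0:ℝ) < b + c - a by linarith)
      (show (0:ℝ) < c + a - b by linarith))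
      (mul_pos (show (0:ℝ) < a + b - c by linarith)
      (show (0:ℝ) < a + b + c by linarith))]
  have h1 : Real.sqrt ((2 * c * a) ^ 2 - (c ^ 2 + a ^ 2 - b ^ 2) ^ 2)
      = Real.sqrt ((2 * b * c) ^ 2 - (b ^ 2 + c ^ 2 - a ^ 2) ^ 2) := by
    congr 1; ring
  have h2 : Real.sqrt ((2 * a * b) ^ 2 - (a ^ 2 + b ^ 2 - c ^ 2) ^ 2)
      = Real.sqrt ((2 * b * c) ^ 2 - (b ^ 2 + c ^ 2 - a ^ 2) ^ 2) := by
    congr 1; ring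
  rw [h1, h2]
  have hS : 0 < Real.sqrt ((2 * b * c) ^ 2 - (b ^ 2 + c ^ 2 - a ^ 2) ^ 2) :=
    Real.sqrt_pos.mpr hT
  simp only [← mul_div_assoc]
  simp only [← add_div]
  apply div_nonneg _ hS.le
  have h4 : 0 < ((b + c - a) * (c + a - b)) * ((a + b - c) * (a + b + c)) := by
    apply mul_pos (mul_pos (by linarith) (by linarith)) (mul_pos (by linarith) (by linarith))
  nlinarith [sq_nonneg (2 * a ^ 2 * (v 0 - v 1) + (a ^ 2 - b ^ 2 + c ^ 2) * (v 1 - v 2)),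
    mul_nonneg h4.le (sq_nonneg (v 1 - v 2)), mul_pos ha0 ha0, sq_nonneg (v 0 - v 1),
    sq_nonneg (v 1 - v 2), sq_nonneg (v 0 - v 2)]
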